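/- Flat version of the paper's Proposition (forward direction): Let E be a complex normed vector space, f : EuclideanSpace ℝ (Fin n) → ℂ differentiable with f x ≠ 0 for all x, and V₀ : EuclideanSpace ℝ (Fin n) → E differentiable. Suppose the map V := fun x => f x • V₀ x is parallel, i.e. HasFDerivAt V (0 : EuclideanSpace ℝ (Fin n) →L[ℝ] E) x for every x. Then there exists a differentiable g : EuclideanSpace ℝ (Fin n) → ℂ with Complex.exp (g x) = f x for all x, and V₀ satisfies (fderiv ℝ V₀ x) u = (-(fderiv ℝ g x) u) • (V₀ x) for all x and u; in particular ∇V₀ = ωV₀ where the ℂ-valued 1-form ω = −dg = −df/f is exact. -/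

import Mathlib

open Set Finset Metric Filter

namespace LogLiftAux

variable {X : Type*} [NormedAddCommGroup X] [NormedSpace ℝ X] [ProperSpace X]

/-- Discretized logarithm along the segment from `0` to `x`, with `N` steps. -/
noncomputable def S (f : X → ℂ) (N : ℕ) (x : X) : ℂ :=
  Complex.log (f 0) +
    ∑ k ∈ Finset.range N,
      Complex.log (f ((((k : ℝ) + 1) / (N : ℝ)) • x) / f (((k : ℝ) / (N : ℝ)) • x))

/-- `N` is a fine enough subdivision for `x`. -/
def Fine (f : X → ℂ) (N : ℕ) (x : X) : Prop :=
  ∀ s t : ℝ, s ∈ Icc (0:ℝ) 1 → t ∈ Icc (0:ℝ) 1 → |s - t| ≤ 1 / (N : ℝ) →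
    ‖f (s • x) / f (t • x) - 1‖ < 1 / 2

lemma re_pos_of_near_one {z : ℂ} (h : ‖z - 1‖ < 1 / 2) : (1:ℝ)/2 < z.re := by
  have h1 : |(z - 1).re| ≤ ‖z - 1‖ := Complex.abs_re_le_norm _
  have h2 : (z - 1).re = z.re - 1 := by simp
  rw [h2] at h1
  have := abs_lt.mp (lt_of_le_of_lt h1 h)
  linarith [this.1]

lemma ne_zero_of_near_one {z : ℂ} (h : ‖z - 1‖ < 1 / 2) : z ≠ 0 := by
  intro hz
  have := re_pos_of_near_one h
  rw [hz] at this; simp at this; linarith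

lemma mem_slitPlane_of_near_one {z : ℂ} (h : ‖z - 1‖ < 1 / 2) : z ∈ Complex.slitPlane :=
  Complex.mem_slitPlane_iff.2 (Or.inl (by linarith [re_pos_of_near_one h]))

lemma log_mul_near {a b : ℂ} (ha : ‖a - 1‖ < 1 / 2) (hb : ‖b - 1‖ < 1 / 2) :
    Complex.log (a * b) = Complex.log a + Complex.log b := by
  have ha0 := ne_zero_of_near_one ha
  have hb0 := ne_zero_of_near_one hb
  have haa : |Complex.arg a| < Real.pi / 2 :=
    Complex.abs_arg_lt_pi_div_two_iff.2 (Or.inl (by linarith [re_pos_of_near_one ha]))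
  have hba : |Complex.arg b| < Real.pi / 2 :=
    Complex.abs_arg_lt_pi_div_two_iff.2 (Or.inl (by linarith [re_pos_of_near_one hb]))
  have h1 := abs_lt.mp haa
  have h2 := abs_lt.mp hba
  exact Complex.log_mul ha0 hb0 ⟨by linarith, by linarith⟩

lemma exp_S {f : X → ℂ} (h0 : ∀ z, f z ≠ 0) {N : ℕ} (hN : N ≠ 0) (x : X) :
    Complex.exp (S f N x) = f x := by
  have hNR : (0:ℝ) < (N : ℝ) := by exact_mod_cast Nat.pos_of_ne_zero hN
  have key : ∀ m : ℕ, m ≤ N →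
      Complex.exp (Complex.log (f 0) +
        ∑ k ∈ Finset.range m,
          Complex.log (f ((((k : ℝ) + 1) / (N : ℝ)) • x) / f (((k : ℝ) / (N : ℝ)) • x)))
      = f (((m : ℝ) / (N : ℝ)) • x) := by
    intro m
    induction m with
    | zero =>
        intro _
        simp [Complex.exp_log (h0 0)]
    | succ m ih =>
        intro hm
        rw [Finset.sum_range_succ, ← add_assoc, Complex.exp_add,
          ih (Nat.le_of_succ_le hm), Complex.exp_log (div_ne_zero (h0 _) (h0 _))]
        push_cast
        rw [mul_comm, div_mul_cancel₀ _ (h0 _)]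
  have := key N le_rfl
  rwa [div_self hNR.ne', one_smul] at this

lemma fine_mono {f : X → ℂ} {N M : ℕ} {x : X} (hF : Fine f N x) (hN : N ≠ 0) (h : N ≤ M) :
    Fine f M x := by
  intro s t hs ht hst
  refine hF s t hs ht (hst.trans ?_)
  have h1 : (0:ℝ) < (N:ℝ) := by exact_mod_cast Nat.pos_of_ne_zero hN
  have h2 : (N:ℝ) ≤ (M:ℝ) := by exact_mod_cast h
  exact one_div_le_one_div_of_le h1 h2

lemma fine_ratio {f : X → ℂ} {N : ℕ} {x : X} (hF : Fine f N x) (hN : N ≠ 0) {k : ℕ}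
    (hk : k < N) :
    ‖f ((((k : ℝ) + 1) / (N : ℝ)) • x) / f (((k : ℝ) / (N : ℝ)) • x) - 1‖ < 1 / 2 := by
  have hNR : (0:ℝ) < (N : ℝ) := by exact_mod_cast Nat.pos_of_ne_zero hN
  have hkN : ((k : ℝ) + 1) ≤ (N : ℝ) := by exact_mod_cast Nat.succ_le_of_lt hk
  refine hF _ _ ⟨by positivity, by rw [div_le_one hNR]; linarith⟩
    ⟨by positivity, by rw [div_le_one hNR]; linarith⟩ ?_
  have heq : ((k:ℝ)+1)/(N:ℝ) - (k:ℝ)/(N:ℝ) = 1/(N:ℝ) := by ring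
  rw [heq, abs_of_nonneg (by positivity)]

lemma sum_group (a : ℕ → ℂ) (N M : ℕ) :
    ∑ i ∈ Finset.range (N * M), a i
      = ∑ k ∈ Finset.range N, ∑ j ∈ Finset.range M, a (k * M + j) := by
  induction N with
  | zero => simp
  | succ n ih =>
      rw [Nat.succ_mul, Finset.sum_range_add, ih, Finset.sum_range_succ]

lemma S_refine {f : X → ℂ} (h0 : ∀ z, f z ≠ 0) {N M : ℕ} {x : X}
    (hF : Fine f N x) (hN : N ≠ 0) (hM : M ≠ 0) :
    S f (N * M) x = S f N x := by
  have hNR : (0:ℝ) < (N : ℝ) := by exact_mod_cast Nat.pos_of_ne_zero hN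
  have hMR : (0:ℝ) < (M : ℝ) := by exact_mod_cast Nat.pos_of_ne_zero hM
  have hM1 : (1:ℝ) ≤ (M : ℝ) := by exact_mod_cast Nat.one_le_iff_ne_zero.mpr hM
  unfold S
  congr 1
  rw [sum_group]
  refine Finset.sum_congr rfl fun k hk => ?_
  rw [Finset.mem_range] at hk
  have hkN : ((k : ℝ) + 1) ≤ (N : ℝ) := by exact_mod_cast Nat.succ_le_of_lt hk
  -- bounds for the subdivision points
  have hpt : ∀ m : ℕ, m ≤ M → ((k * M + m : ℕ) : ℝ) / ((N * M : ℕ) : ℝ) ∈ Icc (0:ℝ) 1 := by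
    intro m hm
    constructor
    · positivity
    · rw [div_le_one (by push_cast; positivity)]
      push_cast
      have : ((m : ℝ)) ≤ (M : ℝ) := by exact_mod_cast hm
      nlinarith
  have hgap : ∀ m : ℕ, m ≤ M →
      |((k * M + m : ℕ) : ℝ) / ((N * M : ℕ) : ℝ) - (k : ℝ) / (N : ℝ)| ≤ 1 / (N : ℝ) := by
    intro m hm
    have hmR : ((m : ℝ)) ≤ (M : ℝ) := by exact_mod_cast hm
    have heq : ((k * M + m : ℕ) : ℝ) / ((N * M : ℕ) : ℝ) - (k : ℝ) / (N : ℝ)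
        = (m : ℝ) / ((N : ℝ) * (M : ℝ)) := by
      push_cast
      field_simp
      ring
    rw [heq, abs_of_nonneg (by positivity)]
    rw [div_le_div_iff₀ (by positivity) hNR]
    nlinarith [Nat.cast_nonneg (α := ℝ) m]
  have hgap1 : ∀ m : ℕ, m < M →
      |((k * M + (m+1) : ℕ) : ℝ) / ((N * M : ℕ) : ℝ)
        - ((k * M + m : ℕ) : ℝ) / ((N * M : ℕ) : ℝ)| ≤ 1 / (N : ℝ) := by
    intro m _
    have heq : ((k * M + (m+1) : ℕ) : ℝ) / ((N * M : ℕ) : ℝ)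
        - ((k * M + m : ℕ) : ℝ) / ((N * M : ℕ) : ℝ) = 1 / ((N : ℝ) * (M : ℝ)) := by
      push_cast
      field_simp
      ring
    rw [heq, abs_of_nonneg (by positivity)]
    rw [div_le_div_iff₀ (by positivity) hNR]
    nlinarith [hM1, hNR]
  -- the key induction
  have key : ∀ m : ℕ, m ≤ M →
      ∑ j ∈ Finset.range m,
        Complex.log (f (((((k * M + j : ℕ) : ℝ) + 1) / ((N * M : ℕ) : ℝ)) • x)
          / f (((((k * M + j : ℕ) : ℝ)) / ((N * M : ℕ) : ℝ)) • x))
      = Complex.log (f (((((k * M + m : ℕ) : ℝ)) / ((N * M : ℕ) : ℝ)) • x)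
          / f (((k : ℝ) / (N : ℝ)) • x)) := by
    intro m
    induction m with
    | zero =>
        intro _
        have heq : ((k * M + 0 : ℕ) : ℝ) / ((N * M : ℕ) : ℝ) = (k : ℝ) / (N : ℝ) := by
          push_cast
          field_simp
          ring
        rw [heq]
        simp [div_self (h0 _)]
    | succ m ih =>
        intro hm
        have hm' : m ≤ M := Nat.le_of_succ_le hm
        rw [Finset.sum_range_succ, ih hm']
        have hcast : (((k * M + m : ℕ) : ℝ) + 1) = ((k * M + (m+1) : ℕ) : ℝ) := by push_cast; ring
        rw [hcast]
        set u : ℝ := ((k * M + m : ℕ) : ℝ) / ((N * M : ℕ) : ℝ) with hu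
        set v : ℝ := ((k * M + (m+1) : ℕ) : ℝ) / ((N * M : ℕ) : ℝ) with hv
        set t0 : ℝ := (k : ℝ) / (N : ℝ) with ht0
        have ht0mem : t0 ∈ Icc (0:ℝ) 1 :=
          ⟨by positivity, by rw [div_le_one hNR]; linarith⟩
        have hp : ‖f (u • x) / f (t0 • x) - 1‖ < 1 / 2 :=
          hF u t0 (hpt m hm') ht0mem (hgap m hm')
        have hq : ‖f (v • x) / f (u • x) - 1‖ < 1 / 2 :=
          hF v u (hpt (m+1) hm) (hpt m hm') (hgap1 m (Nat.lt_of_succ_le hm))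
        rw [← log_mul_near hp hq]
        congr 1
        rw [div_mul_div_comm, mul_comm (f (u • x)), mul_div_mul_right _ _ (h0 _)]
  have hfin := key M le_rfl
  have hcast2 : ((k * M + M : ℕ) : ℝ) / ((N * M : ℕ) : ℝ) = ((k : ℝ) + 1) / (N : ℝ) := by
    push_cast
    field_simp
  rw [hfin, hcast2]

lemma S_eq {f : X → ℂ} (h0 : ∀ z, f z ≠ 0) {N M : ℕ} {x : X}
    (hFN : Fine f N x) (hFM : Fine f M x) (hN : N ≠ 0) (hM : M ≠ 0) :
    S f N x = S f M x := by
  have h1 := S_refine h0 hFN hN hM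
  have h2 := S_refine h0 hFM hM hN
  rw [← h1, ← h2, Nat.mul_comm]

lemma exists_fine {f : X → ℂ} (hf : Continuous f) (h0 : ∀ z, f z ≠ 0) (x₀ : X) :
    ∃ N : ℕ, N ≠ 0 ∧ ∀ y ∈ closedBall x₀ 1, Fine f N y := by
  set K : Set (ℝ × ℝ × X) := Icc (0:ℝ) 1 ×ˢ Icc (0:ℝ) 1 ×ˢ closedBall x₀ 1 with hK
  have hKc : IsCompact K :=
    isCompact_Icc.prod (isCompact_Icc.prod (isCompact_closedBall _ _))
  have hΦ : Continuous fun p : ℝ × ℝ × X => ‖f (p.1 • p.2.2) / f (p.2.1 • p.2.2) - 1‖ := by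
    apply Continuous.norm
    apply Continuous.sub _ continuous_const
    exact (hf.comp (continuous_fst.smul (continuous_snd.comp continuous_snd))).div
      (hf.comp ((continuous_fst.comp continuous_snd).smul (continuous_snd.comp continuous_snd)))
      fun p => h0 _
  set D : Set (ℝ × ℝ × X) :=
    K ∩ (fun p : ℝ × ℝ × X => ‖f (p.1 • p.2.2) / f (p.2.1 • p.2.2) - 1‖) ⁻¹' Ici (1/2) with hD
  have hDc : IsCompact D := hKc.inter_right (isClosed_Ici.preimage hΦ)
  rcases D.eq_empty_or_nonempty with hemp | hne
  · refine ⟨1, one_ne_zero, fun y hy s t hs ht _ => ?_⟩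
    by_contra hcon
    have hmem : (s, t, y) ∈ D := by
      refine ⟨⟨hs, ht, hy⟩, ?_⟩
      simp only [Set.mem_preimage, Set.mem_Ici]
      linarith [not_lt.mp hcon]
    rw [hemp] at hmem
    exact hmem
  · obtain ⟨p₀, hp₀D, hp₀min⟩ :=
      hDc.exists_isMinOn hne ((continuous_fst.sub (continuous_fst.comp continuous_snd)).abs).continuousOn
    have hε : 0 < |p₀.1 - p₀.2.1| := by
      rcases eq_or_lt_of_le (abs_nonneg (p₀.1 - p₀.2.1)) with h | h
      · exfalso
        have hst : p₀.1 = p₀.2.1 := by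
          have := abs_eq_zero.mp h.symm
          linarith [sub_eq_zero.mp this]
        have h12 := hp₀D.2
        simp only [Set.mem_preimage, Set.mem_Ici, hst] at h12
        rw [div_self (h0 _)] at h12
        norm_num at h12
      · exact h
    obtain ⟨N, hN⟩ := exists_nat_one_div_lt hε
    refine ⟨N + 1, Nat.succ_ne_zero N, fun y hy s t hs ht hst => ?_⟩
    by_contra hcon
    have hmem : (s, t, y) ∈ D := by
      refine ⟨⟨hs, ht, hy⟩, ?_⟩
      simp only [Set.mem_preimage, Set.mem_Ici]
      linarith [not_lt.mp hcon]
    have := hp₀min hmem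
    simp only at this
    have : |p₀.1 - p₀.2.1| ≤ |s - t| := this
    have hlt : |s - t| < |p₀.1 - p₀.2.1| := by
      calc |s - t| ≤ 1 / ((N:ℝ) + 1) := by exact_mod_cast hst
        _ < |p₀.1 - p₀.2.1| := hN
    linarith

lemma contAt_S {f : X → ℂ} (hf : Continuous f) (h0 : ∀ z, f z ≠ 0) {N : ℕ} (hN : N ≠ 0)
    {y : X} (hF : Fine f N y) : ContinuousAt (S f N) y := by
  unfold S
  apply ContinuousAt.add continuousAt_const
  apply tendsto_finset_sum
  intro k hk
  rw [Finset.mem_range] at hk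
  have hr : ContinuousAt
      (fun x : X => f ((((k : ℝ) + 1) / (N : ℝ)) • x) / f (((k : ℝ) / (N : ℝ)) • x)) y := by
    exact ((hf.comp (continuous_const_smul _)).continuousAt).div
      ((hf.comp (continuous_const_smul _)).continuousAt) (h0 _)
  exact hr.clog (mem_slitPlane_of_near_one (fine_ratio hF hN hk))

theorem exists_log {f : X → ℂ} (hf : Continuous f) (h0 : ∀ z, f z ≠ 0) :
    ∃ g : X → ℂ, Continuous g ∧ ∀ x, Complex.exp (g x) = f x := by
  choose N hN0 hNfine using exists_fine hf h0
  refine ⟨fun x => S f (N x) x, ?_, fun x => exp_S h0 (hN0 x) x⟩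
  rw [continuous_iff_continuousAt]
  intro x₀
  have hev : (fun x => S f (N x) x) =ᶠ[nhds x₀] S f (N x₀) := by
    filter_upwards [Metric.ball_mem_nhds x₀ one_pos] with y hy
    exact S_eq h0 (hNfine y y (Metric.mem_closedBall_self zero_le_one))
      (hNfine x₀ y (Metric.ball_subset_closedBall hy)) (hN0 y) (hN0 x₀)
  exact (contAt_S hf h0 (hN0 x₀) (hNfine x₀ x₀ (Metric.mem_closedBall_self zero_le_one))).congr
    hev.symm

end LogLiftAux




/-- Flat version (forward direction): if `f` is nonvanishing and differentiable, `V₀` is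
differentiable, and `V = f • V₀` is parallel, then `f = exp g` for a differentiable `g` and
`∇V₀ = ω V₀` with the exact 1-form `ω = -dg = -df/f`. -/
theorem parallel_gives_exact_one_form {E : Type*} [NormedAddCommGroup E] [NormedSpace ℝ E]
    [NormedSpace ℂ E] [IsScalarTower ℝ ℂ E] {n : ℕ}
    (f : EuclideanSpace ℝ (Fin n) → ℂ)
    (hf : Differentiable ℝ f) (hfne : ∀ x, f x ≠ 0)
    (V₀ : EuclideanSpace ℝ (Fin n) → E)
    (hV₀ : Differentiable ℝ V₀)
    (hpar : ∀ x : EuclideanSpace ℝ (Fin n),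
      HasFDerivAt (fun y => f y • V₀ y) (0 : EuclideanSpace ℝ (Fin n) →L[ℝ] E) x) :
    ∃ g : EuclideanSpace ℝ (Fin n) → ℂ,
      Differentiable ℝ g ∧
      (∀ x, Complex.exp (g x) = f x) ∧
      ∀ (x u : EuclideanSpace ℝ (Fin n)),
        (fderiv ℝ V₀ x) u = (-(fderiv ℝ g x u)) • (V₀ x) := by
  obtain ⟨g, hgc, hge⟩ := LogLiftAux.exists_log hf.continuous hfne
  have hgd : Differentiable ℝ g := by
    intro x₀
    set a := g x₀ with ha
    have hne : Complex.exp a ≠ 0 := Complex.exp_ne_zero a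
    have hsd : HasStrictDerivAt Complex.exp (Complex.exp a) a := Complex.hasStrictDerivAt_exp a
    set he := hsd.hasStrictFDerivAt_equiv hne with hhe
    set φ : ℂ → ℂ := he.localInverse _ _ _ with hφ
    have hfx : f x₀ = Complex.exp a := (hge x₀).symm
    have htend : Filter.Tendsto f (nhds x₀) (nhds (Complex.exp a)) := by
      rw [← hfx]; exact hf.continuous.continuousAt
    have h1 : ∀ᶠ y in nhds x₀, Complex.exp (φ (f y)) = f y :=
      htend.eventually he.eventually_right_inverse
    have h2 : ∀ᶠ y in nhds x₀, Complex.exp (g y - φ (f y)) = 1 := by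
      filter_upwards [h1] with y hy
      rw [Complex.exp_sub, hge y, hy, div_self (hfne y)]
    have hφc : ContinuousAt (fun y => g y - φ (f y)) x₀ := by
      refine hgc.continuousAt.sub (ContinuousAt.comp ?_ hf.continuous.continuousAt)
      rw [hfx]
      exact he.localInverse_continuousAt
    have hval : g x₀ - φ (f x₀) = 0 := by
      rw [hfx]
      have := he.localInverse_apply_image
      rw [← hφ] at this
      rw [this, sub_self]
    have h3 : ∀ᶠ y in nhds x₀, ‖g y - φ (f y)‖ < 6 := by
      have h0' : Filter.Tendsto (fun y => g y - φ (f y)) (nhds x₀) (nhds 0) := by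
        rw [← hval]; exact hφc
      have := Metric.tendsto_nhds.mp h0' 6 (by norm_num)
      filter_upwards [this] with y hy
      rwa [dist_zero_right] at hy
    have h4 : ∀ᶠ y in nhds x₀, g y = φ (f y) := by
      filter_upwards [h2, h3] with y hy2 hy3
      obtain ⟨m, hm⟩ := Complex.exp_eq_one_iff.mp hy2
      have hnorm : ‖(m : ℂ) * (2 * (Real.pi : ℂ) * Complex.I)‖ = |(m : ℝ)| * (2 * Real.pi) := by
        rw [norm_mul, norm_mul, norm_mul]
        simp [Complex.norm_real, Real.pi_nonneg, abs_of_nonneg, Real.pi_pos.le]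
      rcases eq_or_ne m 0 with hm0 | hm0
      · rw [hm0] at hm
        simp only [Int.cast_zero, zero_mul] at hm
        exact sub_eq_zero.mp hm
      · exfalso
        rw [hm, hnorm] at hy3
        have h1m : (1:ℝ) ≤ |(m:ℝ)| := by
          rw [← Int.cast_abs]
          exact_mod_cast Int.one_le_abs hm0
        nlinarith [Real.pi_gt_three]
    have hφd : DifferentiableAt ℝ (fun y => φ (f y)) x₀ := by
      refine DifferentiableAt.comp x₀ ?_ (hf x₀)
      rw [hfx]
      exact (he.to_localInverse.differentiableAt).restrictScalars ℝ
    exact hφd.congr_of_eventuallyEq h4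
  refine ⟨g, hgd, hge, fun x u => ?_⟩
  have hgf : HasFDerivAt f ((f x) • fderiv ℝ g x) x := by
    have h := (hgd x).hasFDerivAt.cexp
    have hfe : (fun y => Complex.exp (g y)) = f := funext hge
    rw [hfe, hge x] at h
    exact h
  have hprod := hgf.smul (hV₀ x).hasFDerivAt
  have h0' := hprod.unique (hpar x)
  have h0u := congrArg (fun L : EuclideanSpace ℝ (Fin n) →L[ℝ] E => L u) h0'
  simp only [ContinuousLinearMap.add_apply, ContinuousLinearMap.smul_apply,
    ContinuousLinearMap.smulRight_apply, ContinuousLinearMap.zero_apply] at h0u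
  have hkey : f x • (fderiv ℝ V₀ x) u = f x • ((-(fderiv ℝ g x u)) • V₀ x) := by
    rw [smul_assoc] at h0u
    rw [neg_smul, smul_neg]
    exact eq_neg_of_add_eq_zero_left h0u
  have := congrArg (fun v => (f x)⁻¹ • v) hkey
  simpa [inv_smul_smul₀ (hfne x)] using this
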